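/- Let V = V₁ ⊕ V₂ with a linear automorphism α of V₂ of finite order m, let γ act on V by γ(z₁, z₂) = (z₁ + b₁, α z₂ + b₂) for fixed b₁ ∈ V₁, b₂ ∈ V₂, and let H be a γ-invariant Hermitian form on V with H(w₂, w₁) = 0 for wᵢ ∈ Vᵢ. Set λ := γ^m = translation by m b₁ ∈ V₁. Then for the function f_γ(z) := ρ(λ)^{1/m} exp((π/m) H(z,λ) + (π/(2m²)) H(λ,λ)) (where ρ(λ)^{1/m} is a fixed m-th root), the product f_γ(γ^{m-1}z)···f_γ(γ z)f_γ(z) equals ρ(λ) exp(π H(z,λ) + (π/2) H(λ,λ)). -/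

import Mathlib

open Complex

/-- Bagnera–De Franchis cocycle extraction of an `m`-th root.
`V = V₁ ⊕ V₂`, `α` a linear automorphism of `V₂` of order (dividing) `m`,
`γ(z₁,z₂) = (z₁ + b₁, α z₂ + b₂)` with `γ^m` the translation by `λ := (m b₁, 0) ∈ V₁`,
`H` a `γ`-invariant Hermitian form with `H(V₂, V₁) = 0`, and
`f_γ(z) := ρ(λ)^{1/m} exp((π/m) H(z,λ) + (π/(2m²)) H(λ,λ))` for a fixed `m`-th root
`r = ρ(λ)^{1/m}`.  Then `f_γ(γ^{m-1} z) ⋯ f_γ(γ z) f_γ(z) = ρ(λ) exp(π H(z,λ) + (π/2) H(λ,λ))`. -/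
theorem stmt_12 (V₁ V₂ : Type) [AddCommGroup V₁] [Module ℂ V₁] [AddCommGroup V₂] [Module ℂ V₂]
    (α : V₂ ≃ₗ[ℂ] V₂) (m : ℕ) (hm : 0 < m) (hα : α ^ m = 1)
    (b₁ : V₁) (b₂ : V₂)
    (γ : V₁ × V₂ → V₁ × V₂) (hγ : ∀ z : V₁ × V₂, γ z = (z.1 + b₁, α z.2 + b₂))
    (hb₂ : (∑ i ∈ Finset.range m, (α ^ i) b₂) = 0)
    (H : V₁ × V₂ → V₁ × V₂ → ℂ)
    (hadd1 : ∀ z z' w, H (z + z') w = H z w + H z' w)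
    (hadd2 : ∀ z w w', H z (w + w') = H z w + H z w')
    (hconj : ∀ z w, H w z = (starRingEnd ℂ) (H z w))
    (hinv : ∀ z w : V₁ × V₂, H (z.1, α z.2) (w.1, α w.2) = H z w)
    (hvanish : ∀ (w₁ : V₁) (w₂ : V₂), H ((0 : V₁), w₂) (w₁, (0 : V₂)) = 0)
    (lam : V₁ × V₂) (hlam : lam = (m • b₁, (0 : V₂)))
    (rho r : ℂ) (hr : r ^ m = rho) :
    ∀ z : V₁ × V₂,
      (∏ i ∈ Finset.range m,
        (r * Complex.exp ((Real.pi : ℂ) / (m : ℂ) * H (γ^[i] z) lam +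
            (Real.pi : ℂ) / (2 * (m : ℂ) ^ 2) * H lam lam))) =
      rho * Complex.exp ((Real.pi : ℂ) * H z lam + (Real.pi : ℂ) / 2 * H lam lam) := by
  intro z
  have hm' : (m : ℂ) ≠ 0 := Nat.cast_ne_zero.mpr hm.ne'
  -- H 0 w = 0
  have hzero : ∀ w, H 0 w = 0 := by
    intro w
    have h := hadd1 0 0 w
    rw [add_zero] at h
    exact (left_eq_add.mp h)
  -- scalar multiples in the first slot
  have hsmul : ∀ (n : ℕ) (x w : V₁ × V₂), H (n • x) w = (n : ℂ) * H x w := by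
    intro n x w
    induction n with
    | zero => simp [hzero]
    | succ k ih => rw [succ_nsmul, hadd1, ih]; push_cast; ring
  -- second component irrelevant against lam
  have hfst : ∀ (x : V₁ × V₂), H x lam = H (x.1, 0) lam := by
    intro x
    have hx : x = ((x.1, (0:V₂)) : V₁ × V₂) + ((0:V₁), x.2) := by ext <;> simp
    conv_lhs => rw [hx]
    rw [hadd1, hlam, hvanish, add_zero]
  set c := H ((b₁, (0:V₂)) : V₁ × V₂) lam with hc
  -- H lam lam = m * c
  have hll : H lam lam = (m : ℂ) * c := by
    have : lam = m • ((b₁, (0:V₂)) : V₁ × V₂) := by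
      rw [hlam]; ext <;> simp
    nth_rewrite 1 [this]
    rw [hsmul, hc]
  -- first component of iterates
  have hiter1 : ∀ i : ℕ, (γ^[i] z).1 = z.1 + i • b₁ := by
    intro i
    induction i with
    | zero => simp
    | succ k ih =>
      rw [Function.iterate_succ_apply', hγ, ih, succ_nsmul, add_assoc]
  -- H (γ^[i] z) lam = H z lam + i * c
  have hkey : ∀ i : ℕ, H (γ^[i] z) lam = H z lam + (i : ℂ) * c := by
    intro i
    rw [hfst (γ^[i] z), hiter1, hfst z]
    have : ((z.1 + i • b₁, (0:V₂)) : V₁ × V₂)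
        = ((z.1, (0:V₂)) : V₁ × V₂) + i • ((b₁, (0:V₂)) : V₁ × V₂) := by
      ext <;> simp
    rw [this, hadd1, hsmul]
  -- turn the product into a power times exp of a sum
  rw [Finset.prod_mul_distrib, Finset.prod_const, Finset.card_range, hr,
    ← Complex.exp_sum]
  congr 2
  -- sum of exponents
  have hrw : ∀ i ∈ Finset.range m,
      (Real.pi : ℂ) / (m : ℂ) * H (γ^[i] z) lam +
        (Real.pi : ℂ) / (2 * (m : ℂ) ^ 2) * H lam lam
      = ((Real.pi : ℂ) / (m : ℂ) * H z lam +
          (Real.pi : ℂ) / (2 * (m : ℂ) ^ 2) * ((m : ℂ) * c))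
        + (i : ℂ) * ((Real.pi : ℂ) / (m : ℂ) * c) := by
    intro i _
    rw [hkey i, hll]; ring
  rw [Finset.sum_congr rfl hrw, Finset.sum_add_distrib, Finset.sum_const,
    Finset.card_range, ← Finset.sum_mul, hll]
  have hS : (∑ i ∈ Finset.range m, (i : ℂ)) * 2 = (m : ℂ) * ((m : ℂ) - 1) := by
    have := Finset.sum_range_id_mul_two m
    have h2 : ((∑ i ∈ Finset.range m, i) * 2 : ℕ) = (m * (m - 1) : ℕ) := this
    have := congrArg (Nat.cast : ℕ → ℂ) h2
    push_cast [Nat.cast_sub hm] at this ⊢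
    convert this using 2
  have h2S : (∑ i ∈ Finset.range m, (i : ℂ)) = (m : ℂ) * ((m : ℂ) - 1) / 2 := by
    linear_combination hS / 2
  rw [nsmul_eq_mul, h2S]
  have h4 : ((m:ℂ))⁻¹ * (m:ℂ) = 1 := inv_mul_cancel₀ hm'
  field_simp
  ring
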